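/- Let k be an algebraically closed field of characteristic 0. The group G₁ of all matrices [[a,b],[0,a²]] (a ∈ kˣ, b ∈ k) and the group G₂ of all matrices [[a,b,c],[0,a²,2ab],[0,0,a³]] (a ∈ kˣ, b,c ∈ k) are not isomorphic as groups. -/

import Mathlib

open scoped MatrixGroups

/-- The group `G₁` of matrices `[[a,b],[0,a²]]` (`a ∈ kˣ`, `b ∈ k`) and the
group `G₂` of matrices `[[a,b,c],[0,a²,2ab],[0,0,a³]]` (`a ∈ kˣ`, `b,c ∈ k`) are not
isomorphic as groups. -/
theorem G1_not_isomorphic_G2 (k : Type*) [Field k] [IsAlgClosed k] [CharZero k]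
    (G₁ : Subgroup (GL (Fin 2) k)) (G₂ : Subgroup (GL (Fin 3) k))
    (hG₁ : ∀ M : GL (Fin 2) k, M ∈ G₁ ↔
      ∃ (a : kˣ) (b : k),
        (M : Matrix (Fin 2) (Fin 2) k) = !![(a : k), b; 0, (a : k) ^ 2])
    (hG₂ : ∀ M : GL (Fin 3) k, M ∈ G₂ ↔
      ∃ (a : kˣ) (b c : k),
        (M : Matrix (Fin 3) (Fin 3) k) =
          !![(a : k), b, c; 0, (a : k) ^ 2, 2 * (a : k) * b; 0, 0, (a : k) ^ 3]) :
    ¬ Nonempty (G₁ ≃* G₂) := by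
  rintro ⟨e⟩
  have h2k : (2 : k) ≠ 0 := two_ne_zero
  -- three elements of GL(3,k)
  have hAA : (!![(-1 : k),0,0;0,1,0;0,0,-1] : Matrix (Fin 3) (Fin 3) k) *
      !![(-1 : k),0,0;0,1,0;0,0,-1] = 1 := by
    rw [Matrix.mul_fin_three, Matrix.one_fin_three]; norm_num
  let g : GL (Fin 3) k := ⟨!![(-1 : k),0,0;0,1,0;0,0,-1], !![(-1 : k),0,0;0,1,0;0,0,-1], hAA, hAA⟩
  let h₁ : GL (Fin 3) k :=
    ⟨!![(2 : k),0,0;0,4,0;0,0,8], !![(2 : k)⁻¹,0,0;0,4⁻¹,0;0,0,8⁻¹],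
      by rw [Matrix.mul_fin_three, Matrix.one_fin_three]; norm_num,
      by rw [Matrix.mul_fin_three, Matrix.one_fin_three]; norm_num⟩
  let h₂ : GL (Fin 3) k :=
    ⟨!![(1 : k),0,1;0,1,0;0,0,1], !![(1 : k),0,-1;0,1,0;0,0,1],
      by rw [Matrix.mul_fin_three, Matrix.one_fin_three]; norm_num,
      by rw [Matrix.mul_fin_three, Matrix.one_fin_three]; norm_num⟩
  have hgmem : g ∈ G₂ := by
    rw [hG₂]
    exact ⟨-1, 0, 0, by norm_num [g]⟩
  have hh₁mem : h₁ ∈ G₂ := by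
    rw [hG₂]
    refine ⟨Units.mk0 (2 : k) h2k, 0, 0, ?_⟩
    norm_num [h₁]
  have hh₂mem : h₂ ∈ G₂ := by
    rw [hG₂]
    exact ⟨1, 0, 1, by norm_num [h₂]⟩
  -- relations among them in G₂
  have hgg : (⟨g, hgmem⟩ : G₂) * ⟨g, hgmem⟩ = 1 := Subtype.ext (Units.ext hAA)
  have m1 : (!![(-1 : k),0,0;0,1,0;0,0,-1] * !![(2 : k),0,0;0,4,0;0,0,8]
      : Matrix (Fin 3) (Fin 3) k)
      = !![(2 : k),0,0;0,4,0;0,0,8] * !![(-1 : k),0,0;0,1,0;0,0,-1] := by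
    rw [Matrix.mul_fin_three, Matrix.mul_fin_three]; norm_num
  have m2 : (!![(-1 : k),0,0;0,1,0;0,0,-1] * !![(1 : k),0,1;0,1,0;0,0,1]
      : Matrix (Fin 3) (Fin 3) k)
      = !![(1 : k),0,1;0,1,0;0,0,1] * !![(-1 : k),0,0;0,1,0;0,0,-1] := by
    rw [Matrix.mul_fin_three, Matrix.mul_fin_three]; norm_num
  have hgc₁ : (⟨g, hgmem⟩ : G₂) * ⟨h₁, hh₁mem⟩ = ⟨h₁, hh₁mem⟩ * ⟨g, hgmem⟩ :=
    Subtype.ext (Units.ext m1)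
  have hgc₂ : (⟨g, hgmem⟩ : G₂) * ⟨h₂, hh₂mem⟩ = ⟨h₂, hh₂mem⟩ * ⟨g, hgmem⟩ :=
    Subtype.ext (Units.ext m2)
  -- the corresponding elements of G₁ via the isomorphism
  set x : G₁ := e.symm ⟨g, hgmem⟩ with hxdef
  set y₁ : G₁ := e.symm ⟨h₁, hh₁mem⟩ with hy₁def
  set y₂ : G₁ := e.symm ⟨h₂, hh₂mem⟩ with hy₂def
  have hxx : x * x = 1 := by
    rw [hxdef, ← map_mul, hgg, map_one]
  have hxne : x ≠ 1 := by
    rw [hxdef, ← map_one e.symm]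
    intro h
    have h' : (⟨g, hgmem⟩ : G₂) = 1 := e.symm.injective h
    have h'' : (g : Matrix (Fin 3) (Fin 3) k) = 1 := by
      have := congrArg (fun z : G₂ => ((z : GL (Fin 3) k) : Matrix (Fin 3) (Fin 3) k)) h'
      simpa using this
    have h3 := (Matrix.ext_iff.2 h'') 0 0
    rw [Matrix.one_fin_three] at h3
    norm_num [g] at h3
  have hcomm₁ : x * y₁ = y₁ * x := by
    rw [hxdef, hy₁def, ← map_mul, ← map_mul, hgc₁]
  have hcomm₂ : x * y₂ = y₂ * x := by
    rw [hxdef, hy₂def, ← map_mul, ← map_mul, hgc₂]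
  have hnc : y₁ * y₂ ≠ y₂ * y₁ := by
    rw [hy₁def, hy₂def, ← map_mul, ← map_mul]
    intro h
    have h' : (⟨h₁, hh₁mem⟩ : G₂) * ⟨h₂, hh₂mem⟩ = ⟨h₂, hh₂mem⟩ * ⟨h₁, hh₁mem⟩ :=
      e.symm.injective h
    have h'' : (!![(2 : k),0,0;0,4,0;0,0,8] * !![(1 : k),0,1;0,1,0;0,0,1]
        : Matrix (Fin 3) (Fin 3) k)
        = !![(1 : k),0,1;0,1,0;0,0,1] * !![(2 : k),0,0;0,4,0;0,0,8] := by
      have := congrArg (fun z : G₂ => ((z : GL (Fin 3) k) : Matrix (Fin 3) (Fin 3) k)) h'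
      exact this
    rw [Matrix.mul_fin_three, Matrix.mul_fin_three] at h''
    have h3 := (Matrix.ext_iff.2 h'') 0 2
    norm_num [Matrix.cons_val_two, Matrix.tail_cons, Matrix.head_cons] at h3
  -- now analyze in G₁
  obtain ⟨a, b, hx⟩ := (hG₁ x.1).1 x.2
  obtain ⟨a₁, u₁, hy₁⟩ := (hG₁ y₁.1).1 y₁.2
  obtain ⟨a₂, u₂, hy₂⟩ := (hG₁ y₂.1).1 y₂.2
  -- x is an involution ≠ 1, so its matrix is !![-1, b; 0, 1]
  have hxxM : (!![(a : k), b; 0, (a : k) ^ 2] : Matrix (Fin 2) (Fin 2) k) *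
      !![(a : k), b; 0, (a : k) ^ 2] = 1 := by
    rw [← hx]
    have := congrArg (fun z : G₁ => ((z : GL (Fin 2) k) : Matrix (Fin 2) (Fin 2) k)) hxx
    simpa using this
  rw [Matrix.mul_fin_two, Matrix.one_fin_two] at hxxM
  have ea : (a : k) * a = 1 := by
    have := (Matrix.ext_iff.2 hxxM) 0 0
    simpa using this
  have eb : (a : k) * b + b * (a : k) ^ 2 = 0 := by
    have := (Matrix.ext_iff.2 hxxM) 0 1
    simpa using this
  have hane : (a : k) ≠ 1 := by
    intro h1
    apply hxne
    have hb0 : b = 0 := by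
      rw [h1] at eb
      have : (2 : k) * b = 0 := by linear_combination eb
      rcases mul_eq_zero.1 this with h | h
      · exact absurd h h2k
      · exact h
    have hxval : (x.1 : Matrix (Fin 2) (Fin 2) k) = 1 := by
      rw [hx, h1, hb0, Matrix.one_fin_two]; norm_num
    have : x.1 = 1 := Units.ext hxval
    exact Subtype.ext this
  have ham : (a : k) = -1 := by
    have : ((a : k) - 1) * ((a : k) + 1) = 0 := by linear_combination ea
    rcases mul_eq_zero.1 this with h | h
    · exact absurd (by linear_combination h) hane
    · linear_combination h
  -- commuting relations give u_i in terms of b and a_i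
  have key : ∀ (c : kˣ) (u : k), (x.1 : Matrix (Fin 2) (Fin 2) k) *
      !![(c : k), u; 0, (c : k) ^ 2] = !![(c : k), u; 0, (c : k) ^ 2] * x.1 →
      2 * u = b * ((c : k) ^ 2 - (c : k)) := by
    intro c u hcu
    rw [hx] at hcu
    rw [Matrix.mul_fin_two, Matrix.mul_fin_two] at hcu
    have h01 := (Matrix.ext_iff.2 hcu) 0 1
    simp at h01
    -- h01 : a * u + b * c^2 = c * b + u * a^2
    rw [ham] at h01
    linear_combination -h01
  have hu₁ : 2 * u₁ = b * ((a₁ : k) ^ 2 - (a₁ : k)) := by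
    apply key a₁ u₁
    have h1 : ((x.1 : GL (Fin 2) k) : Matrix (Fin 2) (Fin 2) k) *
        ((y₁.1 : GL (Fin 2) k) : Matrix (Fin 2) (Fin 2) k)
        = ((y₁.1 : GL (Fin 2) k) : Matrix (Fin 2) (Fin 2) k) *
        ((x.1 : GL (Fin 2) k) : Matrix (Fin 2) (Fin 2) k) := by
      have := congrArg (fun z : G₁ => ((z : GL (Fin 2) k) : Matrix (Fin 2) (Fin 2) k)) hcomm₁
      simpa using this
    rw [hy₁] at h1
    exact h1
  have hu₂ : 2 * u₂ = b * ((a₂ : k) ^ 2 - (a₂ : k)) := by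
    apply key a₂ u₂
    have h1 : ((x.1 : GL (Fin 2) k) : Matrix (Fin 2) (Fin 2) k) *
        ((y₂.1 : GL (Fin 2) k) : Matrix (Fin 2) (Fin 2) k)
        = ((y₂.1 : GL (Fin 2) k) : Matrix (Fin 2) (Fin 2) k) *
        ((x.1 : GL (Fin 2) k) : Matrix (Fin 2) (Fin 2) k) := by
      have := congrArg (fun z : G₁ => ((z : GL (Fin 2) k) : Matrix (Fin 2) (Fin 2) k)) hcomm₂
      simpa using this
    rw [hy₂] at h1
    exact h1
  -- but then y₁ and y₂ commute, contradiction
  apply hnc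
  apply Subtype.ext
  apply Units.ext
  show (y₁.1 : Matrix (Fin 2) (Fin 2) k) * (y₂.1 : Matrix (Fin 2) (Fin 2) k)
    = (y₂.1 : Matrix (Fin 2) (Fin 2) k) * (y₁.1 : Matrix (Fin 2) (Fin 2) k)
  have key2 : (a₁ : k) * u₂ + u₁ * (a₂ : k) ^ 2 = (a₂ : k) * u₁ + u₂ * (a₁ : k) ^ 2 := by
    apply mul_left_cancel₀ (two_ne_zero (α := k))
    linear_combination (a₂ : k) ^ 2 * hu₁ - (a₂ : k) * hu₁ +
      (a₁ : k) * hu₂ - (a₁ : k) ^ 2 * hu₂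
  rw [hy₁, hy₂, Matrix.mul_fin_two, Matrix.mul_fin_two, key2, mul_comm (a₁ : k) (a₂ : k),
    mul_comm ((a₁ : k) ^ 2) ((a₂ : k) ^ 2)]
  ext i j
  fin_cases i <;> fin_cases j <;> simp
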